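/- Let ω : (0,∞) → ℝ be nonnegative and nondecreasing, and let a > 0. Then for all s > 0, ∫₀ˢ exp(-a·ω(t)/t) dt ≥ (s²/(2s + a·ω(s))) · exp(-a·ω(s)/s). -/

import Mathlib

open MeasureTheory Real

open Filter Topology Set in
theorem stmt0 (ω : ℝ → ℝ) (hω0 : ∀ t > (0:ℝ), 0 ≤ ω t)
    (hmono : ∀ t₁ t₂ : ℝ, 0 < t₁ → t₁ ≤ t₂ → ω t₁ ≤ ω t₂)
    (a : ℝ) (ha : 0 < a) :
    ∀ s > (0:ℝ),
      s ^ 2 / (2 * s + a * ω s) * Real.exp (-(a * ω s / s)) ≤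
        ∫ t in Set.Ioo (0:ℝ) s, Real.exp (-(a * ω t / t)) := by
  intro s hs
  set M : ℝ := a * ω s with hMdef
  have hM : 0 ≤ M := mul_nonneg ha.le (hω0 s hs)
  set b : ℝ := 2 + M / s with hbdef
  have hb : 0 < b := by positivity
  set K : ℝ := s / b * Real.exp (-(M / s)) with hKdef
  have hK : 0 < K := by positivity
  set g : ℝ → ℝ := fun t => K * Real.exp (-(b * (s / t - 1))) * (b * s / t ^ 2) with hgdef
  set G : ℝ → ℝ := fun t => K * Real.exp (-(b * (s / t - 1))) with hGdef
  -- derivative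
  have hderiv : ∀ t : ℝ, t ≠ 0 → HasDerivAt G (g t) t := by
    intro t ht
    have h1 : HasDerivAt (fun u : ℝ => -(b * (s / u - 1))) (b * s / t ^ 2) t := by
      have h2 : HasDerivAt (fun u : ℝ => s / u) (s * (-(t ^ 2)⁻¹)) t := by
        simpa [div_eq_mul_inv] using (hasDerivAt_inv ht).const_mul s
      have h3 := ((h2.sub_const 1).const_mul b).neg
      refine h3.congr_deriv ?_
      ring
    have := (h1.exp).const_mul K
    refine this.congr_deriv ?_
    simp only [hgdef]; ring
  -- integrability of f on Ioo 0 s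
  have hωmeas : AEMeasurable ω (volume.restrict (Set.Ioo (0:ℝ) s)) :=
    aemeasurable_restrict_of_monotoneOn measurableSet_Ioo
      (fun x hx y hy hxy => hmono x y hx.1 hxy)
  have hfmeas : AEMeasurable (fun t => Real.exp (-(a * ω t / t)))
      (volume.restrict (Set.Ioo (0:ℝ) s)) :=
    Real.measurable_exp.comp_aemeasurable (((hωmeas.const_mul a).div aemeasurable_id).neg)
  have hfint : IntegrableOn (fun t => Real.exp (-(a * ω t / t))) (Set.Ioo (0:ℝ) s) := by
    refine Integrable.mono' (integrable_const 1) hfmeas.aestronglyMeasurable ?_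
    filter_upwards [ae_restrict_mem measurableSet_Ioo] with t ht
    rw [Real.norm_eq_abs, abs_of_pos (Real.exp_pos _)]
    exact Real.exp_le_one_iff.mpr
      (neg_nonpos.mpr (div_nonneg (mul_nonneg ha.le (hω0 t ht.1)) ht.1.le))
  -- pointwise bound
  have hle : ∀ t ∈ Set.Ioo (0:ℝ) s, g t ≤ Real.exp (-(a * ω t / t)) := by
    intro t ht
    have ht0 := ht.1
    have hts := ht.2
    have hst : (1:ℝ) ≤ s / t := (one_le_div ht0).2 hts.le
    have hx : (0:ℝ) ≤ s / t - 1 := sub_nonneg.mpr hst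
    have hexp : Real.exp (-(M / s)) * Real.exp (-(b * (s / t - 1))) =
        Real.exp (-(2 * (s / t - 1))) * Real.exp (-(M / t)) := by
      rw [← Real.exp_add, ← Real.exp_add]
      congr 1
      rw [hbdef]
      field_simp
      ring
    have e1 : g t = (s / t) ^ 2 * Real.exp (-(2 * (s / t - 1))) * Real.exp (-(M / t)) := by
      have : g t = (s / b * (b * s / t ^ 2)) *
          (Real.exp (-(M / s)) * Real.exp (-(b * (s / t - 1)))) := by
        simp only [hgdef, hKdef]; ring
      rw [this, hexp]
      have : s / b * (b * s / t ^ 2) = (s / t) ^ 2 := by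
        field_simp
      rw [this]; ring
    have h2 : (s / t) ^ 2 * Real.exp (-(2 * (s / t - 1))) ≤ 1 := by
      have h3 : s / t ≤ Real.exp (s / t - 1) := by
        have := Real.add_one_le_exp (s / t - 1); linarith
      have h4 : (s / t) ^ 2 ≤ Real.exp (s / t - 1) ^ 2 :=
        pow_le_pow_left₀ (by positivity) h3 2
      have h5 : Real.exp (s / t - 1) ^ 2 = Real.exp (2 * (s / t - 1)) := by
        rw [sq, ← Real.exp_add]; ring_nf
      calc (s / t) ^ 2 * Real.exp (-(2 * (s / t - 1)))
          ≤ Real.exp (2 * (s / t - 1)) * Real.exp (-(2 * (s / t - 1))) := by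
            apply mul_le_mul_of_nonneg_right _ (Real.exp_pos _).le
            rw [← h5]; exact h4
        _ = 1 := by rw [← Real.exp_add]; simp
    have h6 : Real.exp (-(M / t)) ≤ Real.exp (-(a * ω t / t)) := by
      apply Real.exp_le_exp.mpr
      apply neg_le_neg
      gcongr
      rw [hMdef]
      exact mul_le_mul_of_nonneg_left (hmono t s ht0 hts.le) ha.le
    calc g t = (s / t) ^ 2 * Real.exp (-(2 * (s / t - 1))) * Real.exp (-(M / t)) := e1
      _ ≤ 1 * Real.exp (-(M / t)) := mul_le_mul_of_nonneg_right h2 (Real.exp_pos _).le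
      _ = Real.exp (-(M / t)) := one_mul _
      _ ≤ _ := h6
  have key : ∀ ε ∈ Set.Ioo (0:ℝ) s,
      G s - G ε ≤ ∫ t in Set.Ioo (0:ℝ) s, Real.exp (-(a * ω t / t)) := by
    intro ε hε
    have hne : ∀ x ∈ Set.uIcc ε s, x ≠ 0 := by
      intro x hx
      rw [Set.uIcc_of_le hε.2.le] at hx
      exact (lt_of_lt_of_le hε.1 hx.1).ne'
    have hgc : ContinuousOn g (Set.uIcc ε s) := by
      have c1 : ContinuousOn (fun t : ℝ => s / t) (Set.uIcc ε s) :=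
        continuousOn_const.div continuousOn_id hne
      have c2 : ContinuousOn (fun t : ℝ => b * s / t ^ 2) (Set.uIcc ε s) :=
        continuousOn_const.div (continuousOn_pow 2) (fun x hx => pow_ne_zero 2 (hne x hx))
      exact (continuousOn_const.mul (Real.continuous_exp.comp_continuousOn
        ((continuousOn_const.mul (c1.sub continuousOn_const)).neg))).mul c2
    have hFTC : ∫ t in ε..s, g t = G s - G ε :=
      intervalIntegral.integral_eq_sub_of_hasDerivAt
        (fun t ht => hderiv t (hne t ht)) hgc.intervalIntegrable
    have hgint : IntegrableOn g (Set.Ioo ε s) :=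
      (intervalIntegrable_iff_integrableOn_Ioo_of_le hε.2.le).mp hgc.intervalIntegrable
    have hsub : Set.Ioo ε s ⊆ Set.Ioo (0:ℝ) s := Set.Ioo_subset_Ioo hε.1.le le_rfl
    rw [← hFTC, intervalIntegral.integral_of_le hε.2.le, integral_Ioc_eq_integral_Ioo]
    calc ∫ t in Set.Ioo ε s, g t
        ≤ ∫ t in Set.Ioo ε s, Real.exp (-(a * ω t / t)) := by
          refine setIntegral_mono_on hgint (hfint.mono_set hsub) measurableSet_Ioo ?_
          exact fun t ht => hle t (hsub ht)
      _ ≤ ∫ t in Set.Ioo (0:ℝ) s, Real.exp (-(a * ω t / t)) := by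
          refine setIntegral_mono_set hfint ?_ (HasSubset.Subset.eventuallyLE hsub)
          filter_upwards with t using (Real.exp_pos _).le
  have hGs : G s = s ^ 2 / (2 * s + M) * Real.exp (-(M / s)) := by
    have h0 : s / s - 1 = 0 := by rw [div_self hs.ne']; ring
    rw [hGdef]
    simp only [h0, mul_zero, neg_zero, Real.exp_zero, mul_one, hKdef]
    congr 1
    rw [hbdef]
    field_simp
  have hlim : Tendsto (fun ε => G s - G ε) (𝓝[>] (0:ℝ)) (𝓝 (G s)) := by
    have h1 : Tendsto (fun ε : ℝ => s / ε) (𝓝[>] (0:ℝ)) atTop := by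
      simpa [div_eq_mul_inv] using tendsto_inv_nhdsGT_zero.const_mul_atTop hs
    have h2 : Tendsto (fun ε : ℝ => s / ε - 1) (𝓝[>] (0:ℝ)) atTop := by
      simpa [sub_eq_add_neg] using tendsto_atTop_add_const_right _ (-1) h1
    have h3 : Tendsto (fun ε : ℝ => -(b * (s / ε - 1))) (𝓝[>] (0:ℝ)) atBot :=
      tendsto_neg_atTop_atBot.comp (h2.const_mul_atTop hb)
    have h4 : Tendsto (fun ε : ℝ => G ε) (𝓝[>] (0:ℝ)) (𝓝 0) := by
      have := (Real.tendsto_exp_atBot.comp h3).const_mul K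
      simpa [hGdef, Function.comp] using this
    simpa using (h4.const_sub (G s))
  rw [← hGs]
  refine le_of_tendsto hlim ?_
  filter_upwards [Ioo_mem_nhdsGT_of_mem (Set.mem_Ico.mpr ⟨le_refl 0, hs⟩)] with ε hε
    using key ε hε
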